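/- Let f : ℝ → ℝ be continuously differentiable with 1-Lipschitz derivative f', let ε > 0, and let x_- < x_+ be real numbers with f'(x_-) ≤ -ε and 0 ≤ f(x_-) - f(x_+) ≤ (ε/4)·(x_+ - x_-). Then x_+ - x_- ≥ ε/2. -/

import Mathlib

theorem binary_search_ii_gap (f : ℝ → ℝ) (hf : ContDiff ℝ 1 f)
    (hlip : LipschitzWith 1 (deriv f)) (ε : ℝ) (hε : 0 < ε)
    (xm xp : ℝ) (hx : xm < xp) (h₀ : deriv f xm ≤ -ε)
    (h₁ : 0 ≤ f xm - f xp) (h₂ : f xm - f xp ≤ (ε / 4) * (xp - xm)) :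
    ε / 2 ≤ xp - xm := by
  obtain ⟨c, hc, hdc⟩ := exists_deriv_eq_slope f hx
    (hf.continuous.continuousOn)
    (fun x _ => (hf.differentiable one_ne_zero).differentiableAt.differentiableWithinAt)
  have hlc : |deriv f c - deriv f xm| ≤ |c - xm| := by
    have := hlip.dist_le_mul c xm
    simpa [Real.dist_eq] using this
  have h1 : |c - xm| ≤ xp - xm := by
    rw [abs_of_nonneg (by linarith [hc.1])]
    linarith [hc.2]
  have h2 : deriv f c ≤ -ε + (xp - xm) := by
    have := abs_le.mp hlc
    linarith [this.2]
  rw [hdc] at h2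
  have hpos : (0:ℝ) < xp - xm := by linarith
  have h3 : f xp - f xm ≤ (-ε + (xp - xm)) * (xp - xm) := by
    calc f xp - f xm = (f xp - f xm) / (xp - xm) * (xp - xm) := by
          field_simp
      _ ≤ (-ε + (xp - xm)) * (xp - xm) := by
          exact mul_le_mul_of_nonneg_right h2 hpos.le
  nlinarith
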